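/- In the canonical chain partition C_1, …, C_w of a 2-dimensional poset P with realizer [L_1, L_2], for each 1 ≤ i < j ≤ w and each y ∈ C_j there exists x ∈ C_i incomparable to y in P with x before y in L_1. In particular C_1 is a maximal chain of P. -/

import Mathlib

open Finset

/-- The canonical antichain partition (0-indexed) of the subposet induced on `S`,
with respect to a strict relation `lt`. -/
noncomputable def canonAntichain {α : Type*} [DecidableEq α] (lt : α → α → Prop) (S : Finset α) :
    ℕ → Finset α
  | j =>
    let R := S \ (Finset.range j).attach.biUnion (fun i => canonAntichain lt S i.1)
    @Finset.filter α (fun x => ∀ y ∈ R, ¬ lt y x) (fun _ => Classical.dec _) R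
  decreasing_by exact Finset.mem_range.mp i.2

/-- The canonical chain partition `C_0, C_1, …` of a 2-dimensional poset `P` with
realizer `[L₁, L₂]` is the canonical antichain partition of the primary conjugate
`Q = L₁ ∩ reverse L₂` (obtained by recursively removing the minimal elements of `Q`),
its members being chains of `P`.  For all `i < j`, every `y ∈ C_j` admits some
`x ∈ C_i` incomparable to `y` in `P` with `x` before `y` in `L₁`; in particular,
`C_0` is a maximal chain of `P`. -/
theorem canonical_chain_partition_property {X : Type*} [Fintype X] [DecidableEq X]
    [PartialOrder X]
    (r₁ r₂ : X → X → Prop) (h₁ : IsLinearOrder X r₁) (h₂ : IsLinearOrder X r₂)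
    (hreal : ∀ a b : X, a ≤ b ↔ (r₁ a b ∧ r₂ a b)) :
    let qlt : X → X → Prop := fun a b => (r₁ a b ∧ r₂ b a) ∧ a ≠ b
    let C : ℕ → Finset X := canonAntichain qlt Finset.univ
    (∀ i, IsChain (· ≤ ·) (C i : Set X)) ∧
    (∀ i j : ℕ, i < j → ∀ y ∈ C j, ∃ x ∈ C i,
      (¬ x ≤ y ∧ ¬ y ≤ x) ∧ r₁ x y ∧ x ≠ y) ∧
    (∀ S : Finset X, IsChain (· ≤ ·) (S : Set X) → C 0 ⊆ S → S = C 0) := by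
  classical
  intro qlt C
  have hr₁tot : ∀ a b, r₁ a b ∨ r₁ b a := fun a b => h₁.total a b
  have hr₁anti : ∀ a b, r₁ a b → r₁ b a → a = b := fun a b => h₁.antisymm a b
  have hr₂anti : ∀ a b, r₂ a b → r₂ b a → a = b := fun a b => h₂.antisymm a b
  have htr : ∀ a b c, qlt a b → qlt b c → qlt a c := by
    rintro a b c ⟨⟨hab1, hba2⟩, hab⟩ ⟨⟨hbc1, hcb2⟩, hbc⟩
    refine ⟨⟨h₁.trans a b c hab1 hbc1, h₂.trans c b a hcb2 hba2⟩, ?_⟩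
    rintro rfl
    exact hab (hr₁anti a b hab1 hbc1)
  have hirr : ∀ a, ¬ qlt a a := fun a h => h.2 rfl
  have hincomp : ∀ a b, qlt a b → ¬ a ≤ b ∧ ¬ b ≤ a := by
    rintro a b ⟨⟨hab1, hba2⟩, hab⟩
    constructor
    · intro h; exact hab (hr₂anti a b ((hreal a b).1 h).2 hba2)
    · intro h; exact hab (hr₁anti a b hab1 ((hreal b a).1 h).1)
  have hcases : ∀ a b : X, a ≠ b → ¬ qlt a b → ¬ qlt b a → a ≤ b ∨ b ≤ a := by
    intro a b hne hq1 hq2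
    rcases hr₁tot a b with h1 | h1
    · rcases h₂.total a b with h2 | h2
      · exact Or.inl ((hreal a b).2 ⟨h1, h2⟩)
      · exact absurd ⟨⟨h1, h2⟩, hne⟩ hq1
    · rcases h₂.total b a with h2 | h2
      · exact Or.inr ((hreal b a).2 ⟨h1, h2⟩)
      · exact absurd ⟨⟨h1, h2⟩, fun h => hne h.symm⟩ hq2
  -- the residual sets
  set R : ℕ → Finset X :=
    fun j => (Finset.univ : Finset X) \ (Finset.range j).attach.biUnion (fun i => C i.1)
    with hR
  have hCmem : ∀ j y, y ∈ C j ↔ y ∈ R j ∧ ∀ z ∈ R j, ¬ qlt z y := by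
    intro j y
    show y ∈ canonAntichain qlt Finset.univ j ↔ _
    rw [canonAntichain]
    simp only [Finset.mem_filter, hR]
    exact Iff.rfl
  have hRmem : ∀ j y, y ∈ R j ↔ ∀ i < j, y ∉ C i := by
    intro j y
    simp [hR, Finset.mem_sdiff, Finset.mem_biUnion]
  -- minimal elements exist
  have hmin : ∀ T : Finset X, T.Nonempty → ∃ x ∈ T, ∀ w ∈ T, ¬ qlt w x := by
    intro T
    induction T using Finset.induction_on with
    | empty => intro hT; exact absurd hT (by simp)
    | @insert a' s' ha ih =>
      intro _
      rcases s'.eq_empty_or_nonempty with rfl | hs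
      · exact ⟨a', by simp, by simpa using hirr a'⟩
      · obtain ⟨x, hxs, hxmin⟩ := ih hs
        by_cases hax : qlt a' x
        · refine ⟨a', Finset.mem_insert_self _ _, ?_⟩
          intro w hw
          rcases Finset.mem_insert.1 hw with rfl | hw
          · exact hirr w
          · intro hwa; exact hxmin w hw (htr w a' x hwa hax)
        · refine ⟨x, Finset.mem_insert_of_mem hxs, ?_⟩
          intro w hw
          rcases Finset.mem_insert.1 hw with rfl | hw
          · exact hax
          · exact hxmin w hw
  -- key step
  have hstep : ∀ i y, y ∈ R i → y ∉ C i → ∃ x ∈ C i, qlt x y := by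
    intro i y hyR hyC
    have : ∃ z ∈ R i, qlt z y := by
      by_contra h
      push_neg at h
      exact hyC ((hCmem i y).2 ⟨hyR, h⟩)
    obtain ⟨z, hzR, hzy⟩ := this
    obtain ⟨x, hxT, hxmin⟩ := hmin ((R i).filter (fun z => qlt z y)) ⟨z, Finset.mem_filter.2 ⟨hzR, hzy⟩⟩
    rw [Finset.mem_filter] at hxT
    refine ⟨x, (hCmem i x).2 ⟨hxT.1, ?_⟩, hxT.2⟩
    intro w hwR hwx
    exact hxmin w (Finset.mem_filter.2 ⟨hwR, htr w x y hwx hxT.2⟩) hwx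
  have hRanti : ∀ i j : ℕ, i ≤ j → ∀ y, y ∈ R j → y ∈ R i := by
    intro i j hij y hy
    rw [hRmem] at hy ⊢
    exact fun k hk => hy k (lt_of_lt_of_le hk hij)
  refine ⟨?_, ?_, ?_⟩
  · -- chains
    intro i x hx y hy hxy
    rw [Finset.mem_coe, hCmem] at hx hy
    exact hcases x y hxy (hy.2 x hx.1) (hx.2 y hy.1)
  · -- part 2
    intro i j hij y hy
    have hyRj : y ∈ R j := ((hCmem j y).1 hy).1
    have hyRi : y ∈ R i := hRanti i j hij.le y hyRj
    have hyCi : y ∉ C i := by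
      have := (hRmem j y).1 hyRj i hij
      exact this
    obtain ⟨x, hxC, hxy⟩ := hstep i y hyRi hyCi
    exact ⟨x, hxC, hincomp x y hxy, hxy.1.1, hxy.2⟩
  · -- maximality of C 0
    intro S hS hsub
    refine Finset.Subset.antisymm ?_ hsub
    intro y hy
    by_contra hyC
    have hyR : y ∈ R 0 := (hRmem 0 y).2 (fun i hi => absurd hi (Nat.not_lt_zero i))
    obtain ⟨x, hxC, hxy⟩ := hstep 0 y hyR hyC
    have hI := hincomp x y hxy
    rcases hS (hsub hxC) hy hxy.2 with h | h
    · exact hI.1 h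
    · exact hI.2 h
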